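/- Let V₁, V₂ ∈ ℝ² be nonzero vectors that are linearly independent (non-parallel) and non-orthogonal (⟨V₁, V₂⟩ ≠ 0), and let ρ > 0. Then there exists a real 2×2 matrix B and real numbers λ₁ < 0 and λ₂ < 0 such that B · V₁ = λ₁ • V₁, B · V₂ = λ₂ • V₂ (so V₁, V₂ are eigenvectors of B with negative eigenvalues, making the origin an attractor), and the supremum over all Euclidean unit vectors v ∈ ℝ² of ⟨B · v, v⟩ equals ρ (i.e. B has reactivity ρ). -/

import Mathlib

open Real Matrix


private lemma aux_CS (al be r : ℝ) (hr0 : 0 < r) (hr2 : al^2 + be^2 = r^2)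
    (x y : ℝ) (hxy : x^2 + y^2 = 1) : al*x + be*y ≤ r := by
  nlinarith [sq_nonneg (al*y - be*x), sq_nonneg (al*x + be*y + r)]

private lemma aux_pos (V : Fin 2 → ℝ) (h : V ≠ 0) : 0 < (V 0)^2 + (V 1)^2 := by
  rcases (Function.ne_iff.mp h) with ⟨i, hi⟩
  fin_cases i <;> simp_all <;>
    nlinarith [sq_nonneg (V 1), sq_nonneg (V 0), sq_pos_of_ne_zero hi]

set_option maxHeartbeats 1600000 in
theorem stmt_16 (V₁ V₂ : Fin 2 → ℝ) (h1 : V₁ ≠ 0) (h2 : V₂ ≠ 0)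
    (hind : LinearIndependent ℝ ![V₁, V₂]) (hnonorth : V₁ ⬝ᵥ V₂ ≠ 0)
    (ρ : ℝ) (hρ : 0 < ρ) :
    ∃ (B : Matrix (Fin 2) (Fin 2) ℝ) (lam1 lam2 : ℝ), lam1 < 0 ∧ lam2 < 0 ∧
      B.mulVec V₁ = lam1 • V₁ ∧ B.mulVec V₂ = lam2 • V₂ ∧
      IsGreatest {x : ℝ | ∃ v : Fin 2 → ℝ, v 0 ^ 2 + v 1 ^ 2 = 1 ∧ x = B.mulVec v ⬝ᵥ v} ρ := by
  set a1 := V₁ 0 with ha1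
  set a2 := V₁ 1 with ha2
  set b1 := V₂ 0 with hb1
  set b2 := V₂ 1 with hb2
  have hdot : a1*b1 + a2*b2 ≠ 0 := by
    intro h; apply hnonorth; simp [dotProduct, Fin.sum_univ_two, ← ha1, ← ha2, ← hb1, ← hb2]
    linarith
  have key : ∀ (c1 c2 : ℝ), c1 • V₁ + c2 • V₂ = 0 → c1 = 0 ∧ c2 = 0 := by
    intro c1 c2 hc
    have h := Fintype.linearIndependent_iff.mp hind ![c1, c2] (by
      simpa [Fin.sum_univ_two] using hc)
    exact ⟨h 0, h 1⟩
  have hd : a1*b2 - a2*b1 ≠ 0 := by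
    intro h0
    obtain ⟨e1, e2⟩ := key b2 (-a2) (by
      funext j; fin_cases j <;> simp [← ha1, ← ha2, ← hb1, ← hb2] <;> nlinarith)
    obtain ⟨e3, e4⟩ := key b1 (-a1) (by
      funext j; fin_cases j <;> simp [← ha1, ← ha2, ← hb1, ← hb2] <;> nlinarith)
    apply h1
    funext j; fin_cases j <;> simp [← ha1, ← ha2] <;> nlinarith
  set d := a1*b2 - a2*b1 with hdd
  have hn1 : 0 < a1^2 + a2^2 := aux_pos V₁ h1
  have hn2 : 0 < b1^2 + b2^2 := aux_pos V₂ h2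
  -- the geometric factor N = sqrt(n1*n2)/|d| > 1
  set N : ℝ := Real.sqrt ((a1^2+a2^2)*(b1^2+b2^2)) / |d| with hN
  have hdabs : 0 < |d| := abs_pos.mpr hd
  have hNd2 : N^2 * d^2 = (a1^2+a2^2)*(b1^2+b2^2) := by
    rw [hN, div_pow, sq_sqrt (by positivity), sq_abs]
    field_simp
  have hN1 : 1 < N := by
    rw [hN, lt_div_iff₀ hdabs, one_mul]
    have : |d| = Real.sqrt (d^2) := (Real.sqrt_sq_eq_abs d).symm
    rw [this]
    apply Real.sqrt_lt_sqrt (sq_nonneg d)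
    have hid : d^2 + (a1*b1+a2*b2)^2 = (a1^2+a2^2)*(b1^2+b2^2) := by rw [hdd]; ring
    nlinarith [sq_pos_of_ne_zero hdot, hid]
  have hN0 : 0 < N := by linarith
  set S : ℝ := (2*ρ+1)/(N-1) with hS
  have hS0 : 0 < S := div_pos (by linarith) (by linarith)
  set m : ℝ := (2*ρ+S)/N with hm
  have hm0 : 0 < m := div_pos (by linarith) hN0
  have hmN : m * N = 2*ρ + S := by
    rw [hm]; field_simp
  have hSN : S * (N-1) = 2*ρ+1 := by
    rw [hS, div_mul_cancel₀ _ (by linarith : N - 1 ≠ 0)]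
  have hmS : m < S := by
    rw [hm, div_lt_iff₀ hN0]
    nlinarith
  set lam1 : ℝ := (-S + m)/2 with hl1
  set lam2 : ℝ := (-S - m)/2 with hl2
  have hlam1 : lam1 < 0 := by rw [hl1]; linarith
  have hlam2 : lam2 < 0 := by rw [hl2]; linarith
  set B : Matrix (Fin 2) (Fin 2) ℝ :=
    !![(lam1*a1*b2 - lam2*b1*a2)/d, (lam2-lam1)*a1*b1/d;
       (lam1-lam2)*a2*b2/d, (lam2*b2*a1 - lam1*a2*b1)/d] with hB
  refine ⟨B, lam1, lam2, hlam1, hlam2, ?_, ?_, ?_⟩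
  · funext j; fin_cases j <;>
      simp [hB, Matrix.mulVec, dotProduct, Fin.sum_univ_two, ← ha1, ← ha2, ← hb1, ← hb2] <;>
      field_simp <;> ring
  · funext j; fin_cases j <;>
      simp [hB, Matrix.mulVec, dotProduct, Fin.sum_univ_two, ← ha1, ← ha2, ← hb1, ← hb2] <;>
      field_simp <;> ring
  · -- reactivity analysis via symmetric part
    have hl12 : lam1 - lam2 = m := by rw [hl1, hl2]; ring
    have htr : lam1 + lam2 = -S := by rw [hl1, hl2]; ring
    have hB00 : B 0 0 = (lam1*a1*b2 - lam2*b1*a2)/d := by rw [hB]; simp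
    have hB01 : B 0 1 = (lam2-lam1)*a1*b1/d := by rw [hB]; simp
    have hB10 : B 1 0 = (lam1-lam2)*a2*b2/d := by rw [hB]; simp
    have hB11 : B 1 1 = (lam2*b2*a1 - lam1*a2*b1)/d := by rw [hB]; simp
    clear_value a1 a2 b1 b2 d N S m lam1 lam2 B
    clear hN hS hm hl1 hl2 hB hnonorth hind h1 h2 key
    set al : ℝ := (lam1-lam2)*(a1*b2+a2*b1)/(2*d) with hal
    set be : ℝ := (lam1-lam2)*(a2*b2-a1*b1)/(2*d) with hbe
    set r : ℝ := m*N/2 with hr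
    clear_value al be r
    have hr0 : 0 < r := by rw [hr]; positivity
    have hr2 : al^2 + be^2 = r^2 := by
      rw [hal, hbe, hr, hl12]
      field_simp
      linear_combination (-1) * hNd2
    have hρeq : -S/2 + r = ρ := by rw [hr]; linarith [hmN]
    have hval : ∀ w : Fin 2 → ℝ, B.mulVec w ⬝ᵥ w
        = ((lam1+lam2)/2)*((w 0)^2+(w 1)^2) + al*((w 0)^2-(w 1)^2) + 2*be*(w 0 * w 1) := by
      intro w
      have hmv : B.mulVec w ⬝ᵥ w
          = (B 0 0 * w 0 + B 0 1 * w 1)*w 0 + (B 1 0 * w 0 + B 1 1 * w 1)*w 1 := by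
        simp [Matrix.mulVec, dotProduct, Fin.sum_univ_two]
      rw [hmv, hB00, hB01, hB10, hB11, hal, hbe]
      rw [hdd] at hd ⊢
      have hd' : a1 * b2 - b1 * a2 ≠ 0 := by rw [mul_comm b1 a2]; exact hd
      field_simp
      ring
    constructor
    · -- membership : the maximum is attained
      rcases le_or_gt (r + al) 0 with hc | hc
      · have h6 : 0 ≤ (r+al)*(r-al) := by nlinarith [sq_nonneg be]
        have h8 : 0 ≤ r + al := by nlinarith [h6]
        have hal' : al = -r := by linarith
        refine ⟨![0,1], by norm_num, ?_⟩
        rw [hval]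
        simp [hal']
        linarith [hρeq, htr]
      · set L := Real.sqrt (2*r*(r+al)) with hL
        have hL2 : L^2 = 2*r*(r+al) := by rw [hL]; exact Real.sq_sqrt (by positivity)
        have hL0 : 0 < L := by rw [hL]; exact Real.sqrt_pos.mpr (by positivity)
        clear_value L
        have hLne : L ≠ 0 := ne_of_gt hL0
        refine ⟨![(r+al)/L, be/L], ?_, ?_⟩
        · simp only [Matrix.cons_val_zero, Matrix.cons_val_one, Matrix.head_cons]
          field_simp
          linear_combination hr2 - hL2
        · rw [hval]
          simp only [Matrix.cons_val_zero, Matrix.cons_val_one, Matrix.head_cons]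
          have hnum : al*((r+al)^2 - be^2) + 2*be^2*(r+al) = r*L^2 := by
            rw [hL2]; linear_combination (2*r+al)*hr2
          have h3 : al*(((r+al)/L)^2 - (be/L)^2) + 2*be*((r+al)/L * (be/L)) = r := by
            field_simp
            linear_combination hnum
          have h4 : ((r+al)/L)^2 + (be/L)^2 = 1 := by
            field_simp
            linear_combination hr2 - hL2
          rw [h4]
          linarith [h3, hρeq, htr]
    · -- upper bound
      rintro x ⟨v, hvu, rfl⟩
      rw [hval v, hvu]
      have hxy : ((v 0)^2-(v 1)^2)^2 + (2*(v 0)*(v 1))^2 = 1 := by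
        linear_combination ((v 0)^2 + (v 1)^2 + 1) * hvu
      have hkey : al*((v 0)^2-(v 1)^2) + be*(2*(v 0)*(v 1)) ≤ r :=
        aux_CS al be r hr0 hr2 _ _ hxy
      linarith [hkey, hρeq, htr]
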